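/- In the special case a = 0 and c = 1, the minimizer of Q(b) = ∫_0^b (b-r)r dF(r) + ∫_b^1 (1-r)(r-b) dF(r) is b* = F^{-1}(1 - E[R]). -/

import Mathlib

/-- In the special case a = 0 and c = 1, the minimizer of
Q(b) = ∫_0^b (b-r)r dF(r) + ∫_b^1 (1-r)(r-b) dF(r) is b* = F⁻¹(1 - E[R]),
i.e. the point b* ∈ [0,1] satisfying F(b*) = 1 - E[R]. -/
theorem stmt2 (F p : ℝ → ℝ)
    (hF : ∀ x, HasDerivAt F (p x) x) (hpcont : Continuous p)
    (hppos : ∀ x ∈ Set.Icc (0:ℝ) 1, 0 < p x)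
    (hmono : StrictMonoOn F (Set.Icc (0:ℝ) 1))
    (hF0 : F 0 = 0) (hF1 : F 1 = 1)
    (Q : ℝ → ℝ)
    (hQ : ∀ b, Q b = (∫ r in (0:ℝ)..b, (b - r) * r * p r) +
      ∫ r in b..(1:ℝ), (1 - r) * (r - b) * p r)
    (ER : ℝ) (hER : ER = ∫ r in (0:ℝ)..(1:ℝ), r * p r)
    (bstar : ℝ) (hbmem : bstar ∈ Set.Icc (0:ℝ) 1)
    (hbs : F bstar = 1 - ER) :
    IsMinOn Q (Set.Icc (0:ℝ) 1) bstar := by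
  set A : ℝ → ℝ := fun b => ∫ r in (0:ℝ)..b, r * p r with hAdef
  set B : ℝ → ℝ := fun b => ∫ r in (0:ℝ)..b, r * r * p r with hBdef
  set C : ℝ → ℝ := fun b => ∫ r in (1:ℝ)..b, (1 - r) * r * p r with hCdef
  set D : ℝ → ℝ := fun b => ∫ r in (1:ℝ)..b, (1 - r) * p r with hDdef
  have hc1 : Continuous (fun r : ℝ => r * p r) := continuous_id.mul hpcont
  have hc2 : Continuous (fun r : ℝ => r * r * p r) := (continuous_id.mul continuous_id).mul hpcont
  have hc3 : Continuous (fun r : ℝ => (1 - r) * r * p r) :=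
    (((continuous_const.sub continuous_id).mul continuous_id).mul hpcont)
  have hc4 : Continuous (fun r : ℝ => (1 - r) * p r) :=
    ((continuous_const.sub continuous_id).mul hpcont)
  -- rewrite Q
  have hQ' : ∀ b, Q b = b * A b - B b - C b + b * D b := by
    intro b
    rw [hQ b]
    have h1 : (∫ r in (0:ℝ)..b, (b - r) * r * p r) = b * A b - B b := by
      simp only [hAdef, hBdef]
      rw [← intervalIntegral.integral_const_mul, ← intervalIntegral.integral_sub (f := fun r => b * (r * p r))
        ((continuous_const.mul hc1).intervalIntegrable 0 b) (hc2.intervalIntegrable 0 b)]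
      congr 1; ext r; ring
    have h2 : (∫ r in b..(1:ℝ), (1 - r) * (r - b) * p r) = -C b + b * D b := by
      rw [intervalIntegral.integral_symm]
      have h3 : (∫ r in (1:ℝ)..b, (1 - r) * (r - b) * p r) = C b - b * D b := by
        simp only [hCdef, hDdef]
        rw [← intervalIntegral.integral_const_mul,
          ← intervalIntegral.integral_sub (g := fun r => b * ((1 - r) * p r)) (hc3.intervalIntegrable 1 b)
            ((continuous_const.mul hc4).intervalIntegrable 1 b)]
        congr 1; ext r; ring
      rw [h3]; ring
    rw [h1, h2]; ring
  -- derivative of Q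
  have hderiv : ∀ b, HasDerivAt Q (F b + ER - 1) b := by
    intro b
    have hA' : HasDerivAt A (b * p b) b :=
      intervalIntegral.integral_hasDerivAt_right (hc1.intervalIntegrable 0 b)
        (hc1.stronglyMeasurableAtFilter _ _) hc1.continuousAt
    have hB' : HasDerivAt B (b * b * p b) b :=
      intervalIntegral.integral_hasDerivAt_right (hc2.intervalIntegrable 0 b)
        (hc2.stronglyMeasurableAtFilter _ _) hc2.continuousAt
    have hC' : HasDerivAt C ((1 - b) * b * p b) b :=
      intervalIntegral.integral_hasDerivAt_right (hc3.intervalIntegrable 1 b)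
        (hc3.stronglyMeasurableAtFilter _ _) hc3.continuousAt
    have hD' : HasDerivAt D ((1 - b) * p b) b :=
      intervalIntegral.integral_hasDerivAt_right (hc4.intervalIntegrable 1 b)
        (hc4.stronglyMeasurableAtFilter _ _) hc4.continuousAt
    have key : HasDerivAt (fun b => b * A b - B b - C b + b * D b) (A b + D b) b := by
      have h := (((hasDerivAt_id b).mul hA').sub hB').sub hC' |>.add ((hasDerivAt_id b).mul hD')
      simp only [id_eq] at h
      rw [show A b + D b = 1 * A b + b * (b * p b) - b * b * p b - (1 - b) * b * p b + (1 * D b + b * ((1 - b) * p b)) by ring]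
      exact h
    have hADgoal : A b + D b = F b + ER - 1 := by
      have hFp : ∀ x y : ℝ, (∫ r in x..y, p r) = F y - F x := fun x y =>
        intervalIntegral.integral_eq_sub_of_hasDerivAt (fun r _ => hF r)
          (hpcont.intervalIntegrable x y)
      have hD : D b = (F b - F 1) - (A b - ER) := by
        simp only [hDdef]
        have heq1 : (∫ r in (1:ℝ)..b, (1 - r) * p r)
            = (∫ r in (1:ℝ)..b, p r) - (∫ r in (1:ℝ)..b, r * p r) := by
          rw [← intervalIntegral.integral_sub (hpcont.intervalIntegrable 1 b)
            (hc1.intervalIntegrable 1 b)]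
          congr 1; ext r; ring
        rw [heq1, hFp]
        have heq2 : (∫ r in (1:ℝ)..b, r * p r) = A b - ER := by
          rw [hER]
          simp only [hAdef]
          have hsym : (∫ r in (1:ℝ)..b, r * p r) = -∫ r in b..(1:ℝ), r * p r :=
            intervalIntegral.integral_symm (f := fun r => r * p r) (μ := MeasureTheory.volume) b 1
          have hadd := intervalIntegral.integral_add_adjacent_intervals
            (hc1.intervalIntegrable (μ := MeasureTheory.volume) 0 b)
            (hc1.intervalIntegrable (μ := MeasureTheory.volume) b 1)
          rw [hsym]
          linarith [hadd]
        rw [heq2]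
      rw [hD, hF1]; ring
    have hQfun : Q = fun b => b * A b - B b - C b + b * D b := funext hQ'
    rw [hQfun, ← hADgoal]
    exact key
  -- minimality
  obtain ⟨hb0, hb1⟩ := hbmem
  have hdQ : ∀ x, deriv Q x = F x + ER - 1 := fun x => (hderiv x).deriv
  have hcont : Continuous Q :=
    continuous_iff_continuousAt.mpr fun x => (hderiv x).differentiableAt.continuousAt
  rw [isMinOn_iff]
  intro x hx
  obtain ⟨hx0, hx1⟩ := hx
  rcases le_total x bstar with h | h
  · have hanti : AntitoneOn Q (Set.Icc 0 bstar) := by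
      apply antitoneOn_of_deriv_nonpos (convex_Icc 0 bstar) hcont.continuousOn
      · exact fun y _ => ((hderiv y).differentiableAt).differentiableWithinAt
      · intro y hy
        rw [interior_Icc] at hy
        have hyI : y ∈ Set.Icc (0:ℝ) 1 := ⟨le_of_lt hy.1, le_trans (le_of_lt hy.2) hb1⟩
        have hlt := (hmono hyI ⟨hb0, hb1⟩ hy.2).le
        rw [hdQ]
        linarith [hbs ▸ hlt]
    exact hanti ⟨hx0, h⟩ ⟨hb0, le_refl _⟩ h
  · have hmon : MonotoneOn Q (Set.Icc bstar 1) := by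
      apply monotoneOn_of_deriv_nonneg (convex_Icc bstar 1) hcont.continuousOn
      · exact fun y _ => ((hderiv y).differentiableAt).differentiableWithinAt
      · intro y hy
        rw [interior_Icc] at hy
        have hyI : y ∈ Set.Icc (0:ℝ) 1 := ⟨le_trans hb0 (le_of_lt hy.1), le_of_lt hy.2⟩
        have hlt := (hmono ⟨hb0, hb1⟩ hyI hy.1).le
        rw [hdQ]
        linarith [hbs ▸ hlt]
    exact hmon ⟨le_refl _, hb1⟩ ⟨h, hx1⟩ h
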